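/- Let N₁, N₂, W₁, W₂ be positive integers and let τ ∈ ℂ with Im τ > 0. Then there exist integers α, β, γ, δ with αδ − βγ = 1 and (N₁W₂/(N₂W₁))·τ = (ατ + β)/(γτ + δ) if and only if there exist integers x₀, y₀ satisfying (N₂W₁)²x₀² − 2N₁N₂W₁W₂(Re τ)x₀y₀ + (N₁W₂)²|τ|²y₀² = N₁N₂W₁W₂ such that the two real numbers z₀ = −(N₁W₂/(N₂W₁))|τ|²y₀ and w₀ = −2(Re τ)y₀ + (N₂W₁/(N₁W₂))x₀ are both integers. In that case one may take α = x₀, β = z₀, γ = y₀, δ = w₀. -/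

import Mathlib

private lemma tau_sq' (τ : ℂ) : τ^2 = 2*(τ.re:ℂ)*τ - ((‖τ‖ : ℝ)^2 : ℂ) := by
  have h1 : τ + (starRingEnd ℂ) τ = 2*(τ.re:ℂ) := by push_cast [Complex.add_conj]; ring
  have h2 : τ * (starRingEnd ℂ) τ = ((Complex.normSq τ : ℝ) : ℂ) := Complex.mul_conj τ
  have h3 : ((‖τ‖ : ℝ)^2 : ℂ) = ((Complex.normSq τ : ℝ) : ℂ) := by
    norm_cast; exact Complex.sq_norm τ
  rw [h3]
  linear_combination τ * h1 - h2

private lemma duality_aux (A B : ℝ) (hA : 0 < A) (hB : 0 < B) (τ : ℂ) (hτ : 0 < τ.im)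
    (x₀ y₀ z₀ w₀ : ℤ)
    (hquad : B^2*(x₀:ℝ)^2 - 2*(A*B)*τ.re*((x₀:ℝ)*y₀) + A^2*‖τ‖^2*(y₀:ℝ)^2 = A*B)
    (hz : (z₀:ℝ) = -(A/B)*‖τ‖^2*y₀)
    (hw : (w₀:ℝ) = -2*τ.re*(y₀:ℝ) + (B/A)*x₀) :
    x₀*w₀ - z₀*y₀ = 1 ∧ ((A:ℂ)/B)*τ = ((x₀:ℂ)*τ+z₀)/((y₀:ℂ)*τ+w₀) := by
  have hA' : A ≠ 0 := ne_of_gt hA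
  have hB' : B ≠ 0 := ne_of_gt hB
  have hdet : x₀*w₀ - z₀*y₀ = 1 := by
    have : ((x₀:ℝ))*w₀ - z₀*y₀ = 1 := by
      rw [hz, hw]
      field_simp
      linear_combination hquad
    exact_mod_cast this
  refine ⟨hdet, ?_⟩
  have hz' : (z₀:ℂ) = -((A:ℂ)/B)*((‖τ‖:ℝ)^2:ℂ)*y₀ := by
    exact_mod_cast congrArg (Complex.ofReal) hz
  have hw' : (w₀:ℂ) = -2*(τ.re:ℂ)*(y₀:ℂ) + ((B:ℝ):ℂ)/A*x₀ := by
    exact_mod_cast congrArg (Complex.ofReal) hw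
  have hden : (y₀:ℂ)*τ + w₀ ≠ 0 := by
    intro h
    have him : (y₀:ℝ)*τ.im = 0 := by
      have := congrArg Complex.im h
      simpa using this
    have hy : (y₀:ℝ) = 0 := by
      rcases mul_eq_zero.mp him with h'|h'
      · exact h'
      · exact absurd h' (ne_of_gt hτ)
    have hy0 : y₀ = 0 := by exact_mod_cast hy
    have hre : (w₀:ℝ) = 0 := by
      have := congrArg Complex.re h
      simp [hy0] at this
      exact_mod_cast this
    have hw0 : w₀ = 0 := by exact_mod_cast hre
    rw [hy0, hw0] at hdet
    simp at hdet
  rw [eq_div_iff hden, hz', hw']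
  have hts := tau_sq' τ
  have hA'' : (A:ℂ) ≠ 0 := by exact_mod_cast hA'
  have hB'' : (B:ℂ) ≠ 0 := by exact_mod_cast hB'
  field_simp
  linear_combination ((A:ℂ)*(y₀:ℂ))*hts

private lemma duality_aux2 (A B : ℝ) (hA : 0 < A) (hB : 0 < B) (τ : ℂ) (hτ : 0 < τ.im)
    (α β γ δ : ℤ) (hdet : α*δ - β*γ = 1)
    (heq : ((A:ℂ)/B)*τ = ((α:ℂ)*τ+β)/((γ:ℂ)*τ+δ)) :
    B^2*(α:ℝ)^2 - 2*(A*B)*τ.re*((α:ℝ)*γ) + A^2*‖τ‖^2*(γ:ℝ)^2 = A*B ∧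
    (β:ℝ) = -(A/B)*‖τ‖^2*γ ∧
    (δ:ℝ) = -2*τ.re*(γ:ℝ) + (B/A)*α := by
  have hA' : A ≠ 0 := ne_of_gt hA
  have hB' : B ≠ 0 := ne_of_gt hB
  have hA'' : (A:ℂ) ≠ 0 := by exact_mod_cast hA'
  have hB'' : (B:ℂ) ≠ 0 := by exact_mod_cast hB'
  have hden : (γ:ℂ)*τ + δ ≠ 0 := by
    intro h
    have him : (γ:ℝ)*τ.im = 0 := by
      have := congrArg Complex.im h
      simpa using this
    have hy : (γ:ℝ) = 0 := by
      rcases mul_eq_zero.mp him with h'|h'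
      · exact h'
      · exact absurd h' (ne_of_gt hτ)
    have hy0 : γ = 0 := by exact_mod_cast hy
    have hre : (δ:ℝ) = 0 := by
      have := congrArg Complex.re h
      simp [hy0] at this
      exact_mod_cast this
    have hd0 : δ = 0 := by exact_mod_cast hre
    rw [hy0, hd0] at hdet
    simp at hdet
  rw [div_mul_eq_mul_div, div_eq_div_iff hB'' hden] at heq
  have hts := tau_sq' τ
  have key : (((A*δ + 2*A*τ.re*γ - B*α : ℝ)):ℂ)*τ
      + (((-(A*‖τ‖^2*γ) - B*β : ℝ)):ℂ) = 0 := by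
    push_cast
    linear_combination heq - (A:ℂ)*(γ:ℂ)*hts
  have him := congrArg Complex.im key
  have hre := congrArg Complex.re key
  simp only [Complex.add_im, Complex.mul_im, Complex.ofReal_im, Complex.ofReal_re,
    Complex.zero_im, zero_mul, mul_zero, add_zero, zero_add] at him
  simp only [Complex.add_re, Complex.mul_re, Complex.ofReal_im, Complex.ofReal_re,
    Complex.zero_re, zero_mul, mul_zero, sub_zero, add_zero] at hre
  have hc1 : A*(δ:ℝ) + 2*A*τ.re*γ - B*α = 0 := by
    rcases mul_eq_zero.mp him with h|h
    · exact h
    · exact absurd h (ne_of_gt hτ)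
  have hc2 : -(A*‖τ‖^2*(γ:ℝ)) - B*β = 0 := by
    rw [hc1, zero_mul, zero_add] at hre
    exact hre
  have hdetR : (α:ℝ)*δ - (β:ℝ)*γ = 1 := by exact_mod_cast hdet
  refine ⟨?_, ?_, ?_⟩
  · linear_combination (A*B)*hdetR - (B*(α:ℝ))*hc1 - (A*(γ:ℝ))*hc2
  · field_simp
    linear_combination -hc2
  · field_simp
    linear_combination hc1

/-- The `τ`-component of the self-duality condition for `(m,i) = (0,0)` duality defects:
existence of an `SL(2,ℤ)` element realizing the scaling `τ ↦ (N₁W₂/(N₂W₁))·τ` is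
equivalent to integer solvability of a quadratic equation with integrality side
conditions; moreover one may take `α = x₀, β = z₀, γ = y₀, δ = w₀`. -/
theorem duality_defects_tau_component (N₁ N₂ W₁ W₂ : ℕ) (hN₁ : 0 < N₁) (hN₂ : 0 < N₂)
    (hW₁ : 0 < W₁) (hW₂ : 0 < W₂) (τ : ℂ) (hτ : 0 < τ.im) :
    ((∃ α β γ δ : ℤ, α * δ - β * γ = 1 ∧
        ((N₁ * W₂ : ℂ) / (N₂ * W₁)) * τ = ((α : ℂ) * τ + β) / ((γ : ℂ) * τ + δ)) ↔
      (∃ x₀ y₀ : ℤ,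
        ((N₂ * W₁ : ℝ))^2 * x₀^2 - 2 * (N₁ * N₂ * W₁ * W₂ : ℝ) * τ.re * (x₀ * y₀)
            + ((N₁ * W₂ : ℝ))^2 * ‖τ‖^2 * y₀^2 = (N₁ * N₂ * W₁ * W₂ : ℝ) ∧
        (∃ z₀ : ℤ, (z₀ : ℝ) = -((N₁ * W₂ : ℝ) / (N₂ * W₁)) * ‖τ‖^2 * y₀) ∧
        (∃ w₀ : ℤ, (w₀ : ℝ) = -2 * τ.re * y₀ + ((N₂ * W₁ : ℝ) / (N₁ * W₂)) * x₀))) ∧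
    (∀ x₀ y₀ z₀ w₀ : ℤ,
        ((N₂ * W₁ : ℝ))^2 * x₀^2 - 2 * (N₁ * N₂ * W₁ * W₂ : ℝ) * τ.re * (x₀ * y₀)
            + ((N₁ * W₂ : ℝ))^2 * ‖τ‖^2 * y₀^2 = (N₁ * N₂ * W₁ * W₂ : ℝ) →
        (z₀ : ℝ) = -((N₁ * W₂ : ℝ) / (N₂ * W₁)) * ‖τ‖^2 * y₀ →
        (w₀ : ℝ) = -2 * τ.re * y₀ + ((N₂ * W₁ : ℝ) / (N₁ * W₂)) * x₀ →
        x₀ * w₀ - z₀ * y₀ = 1 ∧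
        ((N₁ * W₂ : ℂ) / (N₂ * W₁)) * τ = ((x₀ : ℂ) * τ + z₀) / ((y₀ : ℂ) * τ + w₀)) := by
  have hA : (0:ℝ) < (N₁ * W₂ : ℝ) := by positivity
  have hB : (0:ℝ) < (N₂ * W₁ : ℝ) := by positivity
  have hcoe : ((N₁ * W₂ : ℂ) / (N₂ * W₁)) = (((N₁ * W₂ : ℝ):ℂ) / ((N₂ * W₁ : ℝ):ℂ)) := by
    push_cast; ring
  constructor
  · constructor
    · rintro ⟨α, β, γ, δ, hdet, heq⟩
      rw [hcoe] at heq
      obtain ⟨hq, hz, hw⟩ := duality_aux2 _ _ hA hB τ hτ α β γ δ hdet heq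
      refine ⟨α, γ, ?_, ⟨β, hz⟩, ⟨δ, hw⟩⟩
      linear_combination hq
    · rintro ⟨x₀, y₀, hq, ⟨z₀, hz⟩, ⟨w₀, hw⟩⟩
      have hq' : ((N₂ * W₁ : ℝ))^2*(x₀:ℝ)^2
          - 2*(((N₁ * W₂ : ℝ))*((N₂ * W₁ : ℝ)))*τ.re*((x₀:ℝ)*y₀)
          + ((N₁ * W₂ : ℝ))^2*‖τ‖^2*(y₀:ℝ)^2
          = ((N₁ * W₂ : ℝ))*((N₂ * W₁ : ℝ)) := by
        linear_combination hq
      obtain ⟨hdet, heq⟩ := duality_aux _ _ hA hB τ hτ x₀ y₀ z₀ w₀ hq' hz hw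
      exact ⟨x₀, z₀, y₀, w₀, hdet, by rw [hcoe]; exact heq⟩
  · intro x₀ y₀ z₀ w₀ hq hz hw
    have hq' : ((N₂ * W₁ : ℝ))^2*(x₀:ℝ)^2
        - 2*(((N₁ * W₂ : ℝ))*((N₂ * W₁ : ℝ)))*τ.re*((x₀:ℝ)*y₀)
        + ((N₁ * W₂ : ℝ))^2*‖τ‖^2*(y₀:ℝ)^2
        = ((N₁ * W₂ : ℝ))*((N₂ * W₁ : ℝ)) := by
      linear_combination hq
    obtain ⟨hdet, heq⟩ := duality_aux _ _ hA hB τ hτ x₀ y₀ z₀ w₀ hq' hz hw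
    exact ⟨hdet, by rw [hcoe]; exact heq⟩
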